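/- Let P(u,v) = (k₁·u^{β₁+β₂} + 2k₂·u^{β₁}·v^{β₂} + k₃·v^{β₁+β₂})^{δ/(β₁+β₂)} be a 2-input Kadiyala production function with parameters satisfying (★★), and assume additionally that k₁ > 0, k₂ > 0, k₃ > 0 and δ ≠ 1. Then the Gaussian curvature of the graph surface {(u,v,P(u,v)) : u>0, v>0} vanishes at every point of (0,∞)² if and only if β₁ = β₂ = 1 and k₁k₃ = k₂². -/

import Mathlib

open Real

/-- Partial derivative in the first variable. -/
noncomputable def pdu (f : ℝ → ℝ → ℝ) : ℝ → ℝ → ℝ := fun u v => deriv (fun x => f x v) u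

/-- Partial derivative in the second variable. -/
noncomputable def pdv (f : ℝ → ℝ → ℝ) : ℝ → ℝ → ℝ := fun u v => deriv (fun y => f u y) v

/-- Hessian determinant `f_uu · f_vv − f_uv²` of `f` at `(u, v)`. -/
noncomputable def hessDet (f : ℝ → ℝ → ℝ) (u v : ℝ) : ℝ :=
  pdu (pdu f) u v * pdv (pdv f) u v - pdv (pdu f) u v ^ 2

/-- Gaussian curvature of the graph surface `{(u, v, f u v)}` at `(u, v)`:
`K = (f_uu · f_vv − f_uv²) / (1 + f_u² + f_v²)²`. -/
noncomputable def gaussK (f : ℝ → ℝ → ℝ) (u v : ℝ) : ℝ :=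
  hessDet f u v / (1 + pdu f u v ^ 2 + pdv f u v ^ 2) ^ 2

/-- The 2-input Kadiyala production function
`P(u,v) = (k₁·u^(β₁+β₂) + 2k₂·u^β₁·v^β₂ + k₃·v^(β₁+β₂))^(δ/(β₁+β₂))`. -/
noncomputable def PKad (k₁ k₂ k₃ β₁ β₂ δ : ℝ) : ℝ → ℝ → ℝ := fun u v =>
  (k₁ * u ^ (β₁ + β₂) + 2 * k₂ * u ^ β₁ * v ^ β₂ + k₃ * v ^ (β₁ + β₂)) ^ (δ / (β₁ + β₂))

/-- If `k₁, k₂, k₃ > 0` and `δ ≠ 1`, the Kadiyala surface is developable (its Gaussian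
curvature vanishes at every point of `(0,∞)²`) if and only if `β₁ = β₂ = 1` and
`k₁k₃ = k₂²`. -/

private lemma expDeriv2 {a b p : ℝ} (h : ∀ x : ℝ, a + b * Real.exp (p * x) = 0) :
    ∀ x : ℝ, b * (Real.exp (p * x) * p) = 0 := by
  intro x
  have hpd : HasDerivAt (fun x : ℝ => p * x) p x := by
    simpa using (hasDerivAt_id x).const_mul p
  have h1 : HasDerivAt (fun x : ℝ => a + b * Real.exp (p * x))
      (b * (Real.exp (p * x) * p)) x := (hpd.exp.const_mul b).const_add a
  have h2 : (fun x : ℝ => a + b * Real.exp (p * x)) = fun _ => (0 : ℝ) := funext h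
  rw [h2] at h1
  exact h1.unique (hasDerivAt_const x 0)

private lemma exp2 {a b p : ℝ} (hp : p ≠ 0) (h : ∀ x : ℝ, a + b * Real.exp (p * x) = 0) :
    a = 0 ∧ b = 0 := by
  have hb : b = 0 := by
    have h0 := expDeriv2 h 0
    simp at h0
    tauto
  refine ⟨?_, hb⟩
  have := h 0
  simp [hb] at this
  exact this

private lemma exp3 {a b c p q : ℝ} (hp : p ≠ 0) (hq : q ≠ 0) (hpq : p ≠ q)
    (h : ∀ x : ℝ, a + b * Real.exp (p * x) + c * Real.exp (q * x) = 0) :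
    a = 0 ∧ b = 0 ∧ c = 0 := by
  have hd : ∀ x : ℝ, b * p + c * q * Real.exp ((q - p) * x) = 0 := by
    intro x
    have hpd : HasDerivAt (fun x : ℝ => p * x) p x := by
      simpa using (hasDerivAt_id x).const_mul p
    have hqd : HasDerivAt (fun x : ℝ => q * x) q x := by
      simpa using (hasDerivAt_id x).const_mul q
    have h1 : HasDerivAt (fun x : ℝ => a + b * Real.exp (p * x) + c * Real.exp (q * x))
        (b * (Real.exp (p * x) * p) + c * (Real.exp (q * x) * q)) x :=
      ((hpd.exp.const_mul b).const_add a).add (hqd.exp.const_mul c)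
    have h2 : (fun x : ℝ => a + b * Real.exp (p * x) + c * Real.exp (q * x))
        = fun _ => (0 : ℝ) := funext h
    rw [h2] at h1
    have h3 : b * (Real.exp (p * x) * p) + c * (Real.exp (q * x) * q) = 0 :=
      h1.unique (hasDerivAt_const x 0)
    have he : Real.exp (q * x) = Real.exp ((q - p) * x) * Real.exp (p * x) := by
      rw [← Real.exp_add]; ring_nf
    rw [he] at h3
    have h4 : (b * p + c * q * Real.exp ((q - p) * x)) * Real.exp (p * x) = 0 := by
      linarith [h3]
    exact (mul_eq_zero.mp h4).resolve_right (Real.exp_ne_zero _)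
  obtain ⟨h5, h6⟩ := exp2 (sub_ne_zero.mpr (Ne.symm hpq)) hd
  have hb : b = 0 := by
    rcases mul_eq_zero.mp h5 with h | h
    · exact h
    · exact absurd h hp
  have hc : c = 0 := by
    rcases mul_eq_zero.mp h6 with h | h
    · exact h
    · exact absurd h hq
  refine ⟨?_, hb, hc⟩
  have := h 0
  simp [hb, hc] at this
  exact this

private lemma exp4 {a b c d p q r : ℝ} (hp : p ≠ 0) (hq : q ≠ 0) (hr : r ≠ 0)
    (hpq : p ≠ q) (hpr : p ≠ r) (hqr : q ≠ r)
    (h : ∀ x : ℝ, a + b * Real.exp (p * x) + c * Real.exp (q * x) + d * Real.exp (r * x) = 0) :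
    a = 0 ∧ b = 0 ∧ c = 0 ∧ d = 0 := by
  have hd : ∀ x : ℝ,
      b * p + c * q * Real.exp ((q - p) * x) + d * r * Real.exp ((r - p) * x) = 0 := by
    intro x
    have hpd : HasDerivAt (fun x : ℝ => p * x) p x := by
      simpa using (hasDerivAt_id x).const_mul p
    have hqd : HasDerivAt (fun x : ℝ => q * x) q x := by
      simpa using (hasDerivAt_id x).const_mul q
    have hrd : HasDerivAt (fun x : ℝ => r * x) r x := by
      simpa using (hasDerivAt_id x).const_mul r
    have h1 : HasDerivAt
        (fun x : ℝ => a + b * Real.exp (p * x) + c * Real.exp (q * x) + d * Real.exp (r * x))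
        (b * (Real.exp (p * x) * p) + c * (Real.exp (q * x) * q) + d * (Real.exp (r * x) * r))
        x :=
      (((hpd.exp.const_mul b).const_add a).add (hqd.exp.const_mul c)).add (hrd.exp.const_mul d)
    have h2 : (fun x : ℝ =>
        a + b * Real.exp (p * x) + c * Real.exp (q * x) + d * Real.exp (r * x))
        = fun _ => (0 : ℝ) := funext h
    rw [h2] at h1
    have h3 := h1.unique (hasDerivAt_const x 0)
    have heq : Real.exp (q * x) = Real.exp ((q - p) * x) * Real.exp (p * x) := by
      rw [← Real.exp_add]; ring_nf
    have her : Real.exp (r * x) = Real.exp ((r - p) * x) * Real.exp (p * x) := by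
      rw [← Real.exp_add]; ring_nf
    rw [heq, her] at h3
    have h4 : (b * p + c * q * Real.exp ((q - p) * x) + d * r * Real.exp ((r - p) * x))
        * Real.exp (p * x) = 0 := by linarith [h3]
    exact (mul_eq_zero.mp h4).resolve_right (Real.exp_ne_zero _)
  obtain ⟨h5, h6, h7⟩ := exp3 (sub_ne_zero.mpr (Ne.symm hpq)) (sub_ne_zero.mpr (Ne.symm hpr))
    (fun hh => hqr (by linarith [sub_left_injective.eq_iff.mp hh])) hd
  have hb : b = 0 := by
    rcases mul_eq_zero.mp h5 with h | h
    · exact h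
    · exact absurd h hp
  have hc : c = 0 := by
    rcases mul_eq_zero.mp h6 with h | h
    · exact h
    · exact absurd h hq
  have hdd : d = 0 := by
    rcases mul_eq_zero.mp h7 with h | h
    · exact h
    · exact absurd h hr
  refine ⟨?_, hb, hc, hdd⟩
  have := h 0
  simp [hb, hc, hdd] at this
  exact this

section KadAux

/-- The inner (base) function of the Kadiyala production function. -/
noncomputable def kadG (k₁ k₂ k₃ β₁ β₂ : ℝ) (u v : ℝ) : ℝ :=
  k₁ * u ^ (β₁ + β₂) + 2 * k₂ * u ^ β₁ * v ^ β₂ + k₃ * v ^ (β₁ + β₂)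

/-- u-partial of the base. -/
noncomputable def kadGu (k₁ k₂ k₃ β₁ β₂ : ℝ) (u v : ℝ) : ℝ :=
  k₃ * 0 +
  k₁ * ((β₁ + β₂) * u ^ (β₁ + β₂ - 1)) + 2 * k₂ * (β₁ * u ^ (β₁ - 1)) * v ^ β₂

/-- v-partial of the base. -/
noncomputable def kadGv (k₁ k₂ k₃ β₁ β₂ : ℝ) (u v : ℝ) : ℝ :=
  k₁ * 0 +
  2 * k₂ * u ^ β₁ * (β₂ * v ^ (β₂ - 1)) + k₃ * ((β₁ + β₂) * v ^ (β₁ + β₂ - 1))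

variable {k₁ k₂ k₃ β₁ β₂ : ℝ}

lemma kadG_pos (hk₁ : 0 < k₁) (hk₂ : 0 < k₂) (hk₃ : 0 < k₃) {u v : ℝ}
    (hu : 0 < u) (hv : 0 < v) : 0 < kadG k₁ k₂ k₃ β₁ β₂ u v := by
  unfold kadG; positivity

lemma hasDerivAt_kadG_u {u v : ℝ} (hu : 0 < u) :
    HasDerivAt (fun x => kadG k₁ k₂ k₃ β₁ β₂ x v) (kadGu k₁ k₂ k₃ β₁ β₂ u v) u := by
  unfold kadG kadGu
  have h1 := (Real.hasDerivAt_rpow_const (x := u) (p := β₁ + β₂) (Or.inl hu.ne')).const_mul k₁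
  have h2 := ((Real.hasDerivAt_rpow_const (x := u) (p := β₁)
      (Or.inl hu.ne')).const_mul (2 * k₂)).mul_const (v ^ β₂)
  have h3 := hasDerivAt_const u (k₃ * v ^ (β₁ + β₂))
  have := (h1.add h2).add h3
  exact this.congr_deriv (by ring)

lemma hasDerivAt_kadG_v {u v : ℝ} (hv : 0 < v) :
    HasDerivAt (fun y => kadG k₁ k₂ k₃ β₁ β₂ u y) (kadGv k₁ k₂ k₃ β₁ β₂ u v) v := by
  unfold kadG kadGv
  have h1 := hasDerivAt_const v (k₁ * u ^ (β₁ + β₂))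
  have h2 := (Real.hasDerivAt_rpow_const (x := v) (p := β₂)
      (Or.inl hv.ne')).const_mul (2 * k₂ * u ^ β₁)
  have h3 := (Real.hasDerivAt_rpow_const (x := v) (p := β₁ + β₂)
      (Or.inl hv.ne')).const_mul k₃
  have := (h1.add h2).add h3
  exact this.congr_deriv (by ring)

/-- closed form for the first u-partial of PKad. -/
lemma pdu_PKad (hk₁ : 0 < k₁) (hk₂ : 0 < k₂) (hk₃ : 0 < k₃) {δ u v : ℝ}
    (hu : 0 < u) (hv : 0 < v) :
    pdu (PKad k₁ k₂ k₃ β₁ β₂ δ) u v =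
      kadGu k₁ k₂ k₃ β₁ β₂ u v * (δ / (β₁ + β₂)) *
        kadG k₁ k₂ k₃ β₁ β₂ u v ^ (δ / (β₁ + β₂) - 1) := by
  have hg := kadG_pos (β₁ := β₁) (β₂ := β₂) hk₁ hk₂ hk₃ hu hv
  have h := (hasDerivAt_kadG_u (k₁ := k₁) (k₂ := k₂) (k₃ := k₃) (β₁ := β₁) (β₂ := β₂)
      (v := v) hu).rpow_const (p := δ / (β₁ + β₂)) (Or.inl hg.ne')
  have h2 : (fun x => kadG k₁ k₂ k₃ β₁ β₂ x v ^ (δ / (β₁ + β₂)))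
      = fun x => PKad k₁ k₂ k₃ β₁ β₂ δ x v := rfl
  rw [h2] at h
  exact h.deriv

lemma pdv_PKad (hk₁ : 0 < k₁) (hk₂ : 0 < k₂) (hk₃ : 0 < k₃) {δ u v : ℝ}
    (hu : 0 < u) (hv : 0 < v) :
    pdv (PKad k₁ k₂ k₃ β₁ β₂ δ) u v =
      kadGv k₁ k₂ k₃ β₁ β₂ u v * (δ / (β₁ + β₂)) *
        kadG k₁ k₂ k₃ β₁ β₂ u v ^ (δ / (β₁ + β₂) - 1) := by
  have hg := kadG_pos (β₁ := β₁) (β₂ := β₂) hk₁ hk₂ hk₃ hu hv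
  have h := (hasDerivAt_kadG_v (k₁ := k₁) (k₂ := k₂) (k₃ := k₃) (β₁ := β₁) (β₂ := β₂)
      (u := u) hv).rpow_const (p := δ / (β₁ + β₂)) (Or.inl hg.ne')
  have h2 : (fun y => kadG k₁ k₂ k₃ β₁ β₂ u y ^ (δ / (β₁ + β₂)))
      = fun y => PKad k₁ k₂ k₃ β₁ β₂ δ u y := rfl
  rw [h2] at h
  exact h.deriv

/-- second partials of the base -/
noncomputable def kadGuu (k₁ k₂ k₃ β₁ β₂ : ℝ) (u v : ℝ) : ℝ :=
  k₃ * 0 +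
  k₁ * ((β₁ + β₂) * ((β₁ + β₂ - 1) * u ^ (β₁ + β₂ - 1 - 1))) +
    2 * k₂ * (β₁ * ((β₁ - 1) * u ^ (β₁ - 1 - 1))) * v ^ β₂

noncomputable def kadGuv (k₁ k₂ k₃ β₁ β₂ : ℝ) (u v : ℝ) : ℝ :=
  (k₁ + k₃) * 0 +
  2 * k₂ * (β₁ * u ^ (β₁ - 1)) * (β₂ * v ^ (β₂ - 1))

noncomputable def kadGvv (k₁ k₂ k₃ β₁ β₂ : ℝ) (u v : ℝ) : ℝ :=
  k₁ * 0 +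
  2 * k₂ * u ^ β₁ * (β₂ * ((β₂ - 1) * v ^ (β₂ - 1 - 1))) +
    k₃ * ((β₁ + β₂) * ((β₁ + β₂ - 1) * v ^ (β₁ + β₂ - 1 - 1)))

lemma hasDerivAt_kadGu_u {u v : ℝ} (hu : 0 < u) :
    HasDerivAt (fun x => kadGu k₁ k₂ k₃ β₁ β₂ x v) (kadGuu k₁ k₂ k₃ β₁ β₂ u v) u := by
  unfold kadGu kadGuu
  have h1 := ((Real.hasDerivAt_rpow_const (x := u) (p := β₁ + β₂ - 1)
      (Or.inl hu.ne')).const_mul (β₁ + β₂)).const_mul k₁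
  have h2 := (((Real.hasDerivAt_rpow_const (x := u) (p := β₁ - 1)
      (Or.inl hu.ne')).const_mul β₁).const_mul (2 * k₂)).mul_const (v ^ β₂)
  have h0 := hasDerivAt_const u (k₃ * (0:ℝ))
  have := (h0.add h1).add h2
  exact this.congr_deriv (by ring)

lemma hasDerivAt_kadGu_v {u v : ℝ} (hv : 0 < v) :
    HasDerivAt (fun y => kadGu k₁ k₂ k₃ β₁ β₂ u y) (kadGuv k₁ k₂ k₃ β₁ β₂ u v) v := by
  unfold kadGu kadGuv
  have h0 := hasDerivAt_const v (k₁ * ((β₁ + β₂) * u ^ (β₁ + β₂ - 1)))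
  have h2 := (Real.hasDerivAt_rpow_const (x := v) (p := β₂)
      (Or.inl hv.ne')).const_mul (2 * k₂ * (β₁ * u ^ (β₁ - 1)))
  have := h0.add h2
  rw [show (fun y => k₃ * 0 + k₁ * ((β₁ + β₂) * u ^ (β₁ + β₂ - 1)) +
      2 * k₂ * (β₁ * u ^ (β₁ - 1)) * y ^ β₂) = fun y => k₁ * ((β₁ + β₂) * u ^ (β₁ + β₂ - 1)) +
      2 * k₂ * (β₁ * u ^ (β₁ - 1)) * y ^ β₂ from by funext y; ring]
  exact this.congr_deriv (by ring)

lemma hasDerivAt_kadGv_v {u v : ℝ} (hv : 0 < v) :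
    HasDerivAt (fun y => kadGv k₁ k₂ k₃ β₁ β₂ u y) (kadGvv k₁ k₂ k₃ β₁ β₂ u v) v := by
  unfold kadGv kadGvv
  have h1 := ((Real.hasDerivAt_rpow_const (x := v) (p := β₂ - 1)
      (Or.inl hv.ne')).const_mul β₂).const_mul (2 * k₂ * u ^ β₁)
  have h2 := ((Real.hasDerivAt_rpow_const (x := v) (p := β₁ + β₂ - 1)
      (Or.inl hv.ne')).const_mul (β₁ + β₂)).const_mul k₃
  have h0 := hasDerivAt_const v (k₁ * (0:ℝ))
  have := (h0.add h1).add h2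
  exact this.congr_deriv (by ring)

lemma pduu_PKad (hk₁ : 0 < k₁) (hk₂ : 0 < k₂) (hk₃ : 0 < k₃) {δ u v : ℝ}
    (hu : 0 < u) (hv : 0 < v) :
    pdu (pdu (PKad k₁ k₂ k₃ β₁ β₂ δ)) u v =
      (kadGuu k₁ k₂ k₃ β₁ β₂ u v * (δ / (β₁ + β₂))) *
          kadG k₁ k₂ k₃ β₁ β₂ u v ^ (δ / (β₁ + β₂) - 1)
        + (kadGu k₁ k₂ k₃ β₁ β₂ u v * (δ / (β₁ + β₂))) *
          (kadGu k₁ k₂ k₃ β₁ β₂ u v * (δ / (β₁ + β₂) - 1) *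
            kadG k₁ k₂ k₃ β₁ β₂ u v ^ (δ / (β₁ + β₂) - 1 - 1)) := by
  have hg := kadG_pos (β₁ := β₁) (β₂ := β₂) hk₁ hk₂ hk₃ hu hv
  have hev : (fun x => pdu (PKad k₁ k₂ k₃ β₁ β₂ δ) x v) =ᶠ[nhds u]
      (fun x => kadGu k₁ k₂ k₃ β₁ β₂ x v * (δ / (β₁ + β₂)) *
        kadG k₁ k₂ k₃ β₁ β₂ x v ^ (δ / (β₁ + β₂) - 1)) := by
    filter_upwards [Ioi_mem_nhds hu] with x hx
    exact pdu_PKad hk₁ hk₂ hk₃ hx hv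
  have h2 := (hasDerivAt_kadGu_u (k₁ := k₁) (k₂ := k₂) (k₃ := k₃) (β₁ := β₁) (β₂ := β₂)
      (v := v) hu).mul_const (δ / (β₁ + β₂))
  have h3 := (hasDerivAt_kadG_u (k₁ := k₁) (k₂ := k₂) (k₃ := k₃) (β₁ := β₁) (β₂ := β₂)
      (v := v) hu).rpow_const (p := δ / (β₁ + β₂) - 1) (Or.inl hg.ne')
  have h4 := h2.mul h3
  have : pdu (pdu (PKad k₁ k₂ k₃ β₁ β₂ δ)) u v
      = deriv (fun x => pdu (PKad k₁ k₂ k₃ β₁ β₂ δ) x v) u := rfl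
  rw [this, hev.deriv_eq]
  exact h4.deriv

lemma pduv_PKad (hk₁ : 0 < k₁) (hk₂ : 0 < k₂) (hk₃ : 0 < k₃) {δ u v : ℝ}
    (hu : 0 < u) (hv : 0 < v) :
    pdv (pdu (PKad k₁ k₂ k₃ β₁ β₂ δ)) u v =
      (kadGuv k₁ k₂ k₃ β₁ β₂ u v * (δ / (β₁ + β₂))) *
          kadG k₁ k₂ k₃ β₁ β₂ u v ^ (δ / (β₁ + β₂) - 1)
        + (kadGu k₁ k₂ k₃ β₁ β₂ u v * (δ / (β₁ + β₂))) *
          (kadGv k₁ k₂ k₃ β₁ β₂ u v * (δ / (β₁ + β₂) - 1) *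
            kadG k₁ k₂ k₃ β₁ β₂ u v ^ (δ / (β₁ + β₂) - 1 - 1)) := by
  have hg := kadG_pos (β₁ := β₁) (β₂ := β₂) hk₁ hk₂ hk₃ hu hv
  have hev : (fun y => pdu (PKad k₁ k₂ k₃ β₁ β₂ δ) u y) =ᶠ[nhds v]
      (fun y => kadGu k₁ k₂ k₃ β₁ β₂ u y * (δ / (β₁ + β₂)) *
        kadG k₁ k₂ k₃ β₁ β₂ u y ^ (δ / (β₁ + β₂) - 1)) := by
    filter_upwards [Ioi_mem_nhds hv] with y hy
    exact pdu_PKad hk₁ hk₂ hk₃ hu hy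
  have h2 := (hasDerivAt_kadGu_v (k₁ := k₁) (k₂ := k₂) (k₃ := k₃) (β₁ := β₁) (β₂ := β₂)
      (u := u) hv).mul_const (δ / (β₁ + β₂))
  have h3 := (hasDerivAt_kadG_v (k₁ := k₁) (k₂ := k₂) (k₃ := k₃) (β₁ := β₁) (β₂ := β₂)
      (u := u) hv).rpow_const (p := δ / (β₁ + β₂) - 1) (Or.inl hg.ne')
  have h4 := h2.mul h3
  have : pdv (pdu (PKad k₁ k₂ k₃ β₁ β₂ δ)) u v
      = deriv (fun y => pdu (PKad k₁ k₂ k₃ β₁ β₂ δ) u y) v := rfl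
  rw [this, hev.deriv_eq]
  exact h4.deriv

lemma pdvv_PKad (hk₁ : 0 < k₁) (hk₂ : 0 < k₂) (hk₃ : 0 < k₃) {δ u v : ℝ}
    (hu : 0 < u) (hv : 0 < v) :
    pdv (pdv (PKad k₁ k₂ k₃ β₁ β₂ δ)) u v =
      (kadGvv k₁ k₂ k₃ β₁ β₂ u v * (δ / (β₁ + β₂))) *
          kadG k₁ k₂ k₃ β₁ β₂ u v ^ (δ / (β₁ + β₂) - 1)
        + (kadGv k₁ k₂ k₃ β₁ β₂ u v * (δ / (β₁ + β₂))) *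
          (kadGv k₁ k₂ k₃ β₁ β₂ u v * (δ / (β₁ + β₂) - 1) *
            kadG k₁ k₂ k₃ β₁ β₂ u v ^ (δ / (β₁ + β₂) - 1 - 1)) := by
  have hg := kadG_pos (β₁ := β₁) (β₂ := β₂) hk₁ hk₂ hk₃ hu hv
  have hev : (fun y => pdv (PKad k₁ k₂ k₃ β₁ β₂ δ) u y) =ᶠ[nhds v]
      (fun y => kadGv k₁ k₂ k₃ β₁ β₂ u y * (δ / (β₁ + β₂)) *
        kadG k₁ k₂ k₃ β₁ β₂ u y ^ (δ / (β₁ + β₂) - 1)) := by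
    filter_upwards [Ioi_mem_nhds hv] with y hy
    exact pdv_PKad hk₁ hk₂ hk₃ hu hy
  have h2 := (hasDerivAt_kadGv_v (k₁ := k₁) (k₂ := k₂) (k₃ := k₃) (β₁ := β₁) (β₂ := β₂)
      (u := u) hv).mul_const (δ / (β₁ + β₂))
  have h3 := (hasDerivAt_kadG_v (k₁ := k₁) (k₂ := k₂) (k₃ := k₃) (β₁ := β₁) (β₂ := β₂)
      (u := u) hv).rpow_const (p := δ / (β₁ + β₂) - 1) (Or.inl hg.ne')
  have h4 := h2.mul h3
  have : pdv (pdv (PKad k₁ k₂ k₃ β₁ β₂ δ)) u v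
      = deriv (fun y => pdv (PKad k₁ k₂ k₃ β₁ β₂ δ) u y) v := rfl
  rw [this, hev.deriv_eq]
  exact h4.deriv

end KadAux

lemma hessDet_PKad {k₁ k₂ k₃ β₁ β₂ : ℝ} (hk₁ : 0 < k₁) (hk₂ : 0 < k₂) (hk₃ : 0 < k₃)
    {δ u v : ℝ} (hu : 0 < u) (hv : 0 < v) :
    hessDet (PKad k₁ k₂ k₃ β₁ β₂ δ) u v =
      (δ / (β₁ + β₂)) ^ 2 * (δ / (β₁ + β₂) * (β₁ + β₂) - 1) *
        kadG k₁ k₂ k₃ β₁ β₂ u v ^ (2 * (δ / (β₁ + β₂)) - 2) *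
        (u ^ (β₁ - 2) * v ^ (β₂ - 2)) *
        (2 * (β₁ + β₂) * k₁ * k₂ * β₂ * (β₂ - 1) * (u ^ β₁ * u ^ β₂)
          + k₁ * k₃ * (β₁ + β₂) ^ 2 * (β₁ + β₂ - 1) * (u ^ β₂ * v ^ β₁)
          - 4 * k₂ ^ 2 * β₁ * β₂ * (u ^ β₁ * v ^ β₂)
          + 2 * k₂ * k₃ * (β₁ + β₂) * β₁ * (β₁ - 1) * (v ^ β₁ * v ^ β₂)) := by
  have hg := kadG_pos (β₁ := β₁) (β₂ := β₂) hk₁ hk₂ hk₃ hu hv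
  rw [hessDet, pduu_PKad hk₁ hk₂ hk₃ hu hv, pdvv_PKad hk₁ hk₂ hk₃ hu hv,
    pduv_PKad hk₁ hk₂ hk₃ hu hv]
  set α := δ / (β₁ + β₂) with hα
  unfold kadG at hg ⊢
  unfold kadGu kadGv kadGuu kadGuv kadGvv
  simp only [show α - 1 - 1 = α - 2 from by ring,
    show β₁ + β₂ - 1 - 1 = β₁ + β₂ - 2 from by ring,
    show β₁ - 1 - 1 = β₁ - 2 from by ring,
    show β₂ - 1 - 1 = β₂ - 2 from by ring]
  have eG1 : (k₁ * u ^ (β₁ + β₂) + 2 * k₂ * u ^ β₁ * v ^ β₂ + k₃ * v ^ (β₁ + β₂)) ^ (α - 1)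
      = (k₁ * u ^ (β₁ + β₂) + 2 * k₂ * u ^ β₁ * v ^ β₂ + k₃ * v ^ (β₁ + β₂)) ^ (α - 2)
        * (k₁ * u ^ (β₁ + β₂) + 2 * k₂ * u ^ β₁ * v ^ β₂ + k₃ * v ^ (β₁ + β₂)) := by
    rw [show α - 1 = (α - 2) + 1 from by ring, Real.rpow_add hg, Real.rpow_one]
  have eG2 : (k₁ * u ^ (β₁ + β₂) + 2 * k₂ * u ^ β₁ * v ^ β₂ + k₃ * v ^ (β₁ + β₂)) ^ (2 * α - 2)
      = (k₁ * u ^ (β₁ + β₂) + 2 * k₂ * u ^ β₁ * v ^ β₂ + k₃ * v ^ (β₁ + β₂)) ^ (α - 2)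
        * ((k₁ * u ^ (β₁ + β₂) + 2 * k₂ * u ^ β₁ * v ^ β₂ + k₃ * v ^ (β₁ + β₂)) ^ (α - 2)
          * ((k₁ * u ^ (β₁ + β₂) + 2 * k₂ * u ^ β₁ * v ^ β₂ + k₃ * v ^ (β₁ + β₂))
            * (k₁ * u ^ (β₁ + β₂) + 2 * k₂ * u ^ β₁ * v ^ β₂ + k₃ * v ^ (β₁ + β₂)))) := by
    rw [show 2 * α - 2 = (α - 2) + ((α - 2) + (1 + 1)) from by ring, Real.rpow_add hg,
      Real.rpow_add hg, Real.rpow_add hg, Real.rpow_one]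
  rw [eG2]
  simp only [eG1]
  have eU0 : u ^ (β₁ + β₂) = u ^ β₁ * u ^ β₂ := Real.rpow_add hu _ _
  have eU1 : u ^ (β₁ + β₂ - 1) = u ^ β₁ * u ^ β₂ / u := by
    rw [Real.rpow_sub hu, Real.rpow_one, Real.rpow_add hu]
  have eU2 : u ^ (β₁ + β₂ - 2) = u ^ β₁ * u ^ β₂ / (u * u) := by
    rw [show β₁ + β₂ - 2 = (β₁ + β₂) - (1 + 1) from by ring, Real.rpow_sub hu,
      Real.rpow_add hu, Real.rpow_add hu, Real.rpow_one]
  have eU3 : u ^ (β₁ - 1) = u ^ β₁ / u := by rw [Real.rpow_sub hu, Real.rpow_one]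
  have eU4 : u ^ (β₁ - 2) = u ^ β₁ / (u * u) := by
    rw [show β₁ - 2 = β₁ - (1 + 1) from by ring, Real.rpow_sub hu, Real.rpow_add hu,
      Real.rpow_one]
  have eV0 : v ^ (β₁ + β₂) = v ^ β₁ * v ^ β₂ := Real.rpow_add hv _ _
  have eV1 : v ^ (β₁ + β₂ - 1) = v ^ β₁ * v ^ β₂ / v := by
    rw [Real.rpow_sub hv, Real.rpow_one, Real.rpow_add hv]
  have eV2 : v ^ (β₁ + β₂ - 2) = v ^ β₁ * v ^ β₂ / (v * v) := by
    rw [show β₁ + β₂ - 2 = (β₁ + β₂) - (1 + 1) from by ring, Real.rpow_sub hv,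
      Real.rpow_add hv, Real.rpow_add hv, Real.rpow_one]
  have eV3 : v ^ (β₂ - 1) = v ^ β₂ / v := by rw [Real.rpow_sub hv, Real.rpow_one]
  have eV4 : v ^ (β₂ - 2) = v ^ β₂ / (v * v) := by
    rw [show β₂ - 2 = β₂ - (1 + 1) from by ring, Real.rpow_sub hv, Real.rpow_add hv,
      Real.rpow_one]
  simp only [eU0, eU1, eU2, eU3, eU4, eV0, eV1, eV2, eV3, eV4]
  field_simp
  ring


theorem kadiyala_all_positive_developable_iff
    (k₁ k₂ k₃ β₁ β₂ δ : ℝ)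
    (hsum : k₁ + 2 * k₂ + k₃ = 1) (hk₁ : 0 ≤ k₁) (hk₂ : 0 ≤ k₂) (hk₃ : 0 ≤ k₃)
    (h12 : ¬(k₁ = 0 ∧ k₂ = 0)) (h23 : ¬(k₂ = 0 ∧ k₃ = 0))
    (hβ₁ : 0 < β₁ * (β₁ + β₂)) (hβ₂ : 0 < β₂ * (β₁ + β₂)) (hδ : 0 < δ) (hk₁' : 0 < k₁) (hk₂' : 0 < k₂) (hk₃' : 0 < k₃) (hδ1 : δ ≠ 1) :
    (∀ u v : ℝ, 0 < u → 0 < v → gaussK (PKad k₁ k₂ k₃ β₁ β₂ δ) u v = 0) ↔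
      (β₁ = 1 ∧ β₂ = 1 ∧ k₁ * k₃ = k₂ ^ 2) := by
  have hs : β₁ + β₂ ≠ 0 := by
    intro h; rw [h, mul_zero] at hβ₁; exact lt_irrefl 0 hβ₁
  have hb1 : β₁ ≠ 0 := by
    intro h; rw [h, zero_mul] at hβ₁; exact lt_irrefl 0 hβ₁
  have hb2 : β₂ ≠ 0 := by
    intro h; rw [h, zero_mul] at hβ₂; exact lt_irrefl 0 hβ₂
  have hαne : δ / (β₁ + β₂) ≠ 0 := div_ne_zero hδ.ne' hs
  have hfacne : δ / (β₁ + β₂) * (β₁ + β₂) - 1 ≠ 0 := by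
    rw [div_mul_cancel₀ _ hs]; exact sub_ne_zero.mpr hδ1
  constructor
  · intro h
    -- Step 1: the bracket vanishes along u = 1.
    have hbr : ∀ w : ℝ, 0 < w →
        2 * (β₁ + β₂) * k₁ * k₂ * β₂ * (β₂ - 1)
          + k₁ * k₃ * (β₁ + β₂) ^ 2 * (β₁ + β₂ - 1) * w ^ β₁
          + -(4 * k₂ ^ 2 * β₁ * β₂) * w ^ β₂
          + 2 * k₂ * k₃ * (β₁ + β₂) * β₁ * (β₁ - 1) * (w ^ β₁ * w ^ β₂) = 0 := by
      intro w hw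
      have h1 := h 1 w one_pos hw
      rw [gaussK] at h1
      have hden : ((1 : ℝ) + pdu (PKad k₁ k₂ k₃ β₁ β₂ δ) 1 w ^ 2
          + pdv (PKad k₁ k₂ k₃ β₁ β₂ δ) 1 w ^ 2) ^ 2 ≠ 0 := by positivity
      have h2 : hessDet (PKad k₁ k₂ k₃ β₁ β₂ δ) 1 w = 0 := by
        rcases div_eq_zero_iff.mp h1 with h2 | h2
        · exact h2
        · exact absurd h2 hden
      rw [hessDet_PKad hk₁' hk₂' hk₃' one_pos hw] at h2
      have hg := kadG_pos (β₁ := β₁) (β₂ := β₂) hk₁' hk₂' hk₃' one_pos hw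
      have hP : (δ / (β₁ + β₂)) ^ 2 * (δ / (β₁ + β₂) * (β₁ + β₂) - 1) *
          kadG k₁ k₂ k₃ β₁ β₂ 1 w ^ (2 * (δ / (β₁ + β₂)) - 2) *
          ((1 : ℝ) ^ (β₁ - 2) * w ^ (β₂ - 2)) ≠ 0 := by
        refine mul_ne_zero (mul_ne_zero (mul_ne_zero (pow_ne_zero 2 hαne) hfacne) ?_) ?_
        · exact (Real.rpow_pos_of_pos hg _).ne'
        · have h1p : (0:ℝ) < (1 : ℝ) ^ (β₁ - 2) := Real.rpow_pos_of_pos one_pos _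
          have h2p : (0:ℝ) < w ^ (β₂ - 2) := Real.rpow_pos_of_pos hw _
          positivity
      have h3 := (mul_eq_zero.mp h2).resolve_left hP
      simp only [Real.one_rpow, one_mul, mul_one] at h3
      linarith [h3]
    -- Step 2: exponential form.
    have hexp : ∀ x : ℝ,
        2 * (β₁ + β₂) * k₁ * k₂ * β₂ * (β₂ - 1)
          + k₁ * k₃ * (β₁ + β₂) ^ 2 * (β₁ + β₂ - 1) * Real.exp (β₁ * x)
          + -(4 * k₂ ^ 2 * β₁ * β₂) * Real.exp (β₂ * x)
          + 2 * k₂ * k₃ * (β₁ + β₂) * β₁ * (β₁ - 1) * Real.exp ((β₁ + β₂) * x) = 0 := by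
      intro x
      have h3 := hbr (Real.exp x) (Real.exp_pos x)
      have e1 : (Real.exp x) ^ β₁ = Real.exp (β₁ * x) := by
        rw [← Real.exp_mul, mul_comm]
      have e2 : (Real.exp x) ^ β₂ = Real.exp (β₂ * x) := by
        rw [← Real.exp_mul, mul_comm]
      have e3 : Real.exp (β₁ * x) * Real.exp (β₂ * x) = Real.exp ((β₁ + β₂) * x) := by
        rw [← Real.exp_add]; ring_nf
      rw [e1, e2, e3] at h3
      exact h3
    by_cases hbb : β₁ = β₂
    · -- β₁ = β₂ : three distinct exponents 0, β₁, 2β₁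
      subst hbb
      have h2b : (2 : ℝ) * β₁ ≠ 0 := mul_ne_zero two_ne_zero hb1
      have hne12 : β₁ ≠ 2 * β₁ := fun hh => hb1 (by linarith)
      have h3 : ∀ x : ℝ,
          2 * (β₁ + β₁) * k₁ * k₂ * β₁ * (β₁ - 1)
            + (k₁ * k₃ * (β₁ + β₁) ^ 2 * (β₁ + β₁ - 1) + -(4 * k₂ ^ 2 * β₁ * β₁))
              * Real.exp (β₁ * x)
            + 2 * k₂ * k₃ * (β₁ + β₁) * β₁ * (β₁ - 1) * Real.exp ((2 * β₁) * x) = 0 := by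
        intro x
        have h4 := hexp x
        rw [show β₁ + β₁ = 2 * β₁ from by ring] at h4
        rw [show β₁ + β₁ = 2 * β₁ from by ring]
        linarith [h4]
      obtain ⟨hA, hBC, hD⟩ := exp3 hb1 h2b hne12 h3
      have hβone : β₁ = 1 := by
        by_contra hne
        have hne1 : β₁ - 1 ≠ 0 := sub_ne_zero.mpr hne
        have : 2 * (β₁ + β₁) * k₁ * k₂ * β₁ * (β₁ - 1) ≠ 0 := by
          refine mul_ne_zero (mul_ne_zero (mul_ne_zero (mul_ne_zero
            (mul_ne_zero two_ne_zero ?_) hk₁'.ne') hk₂'.ne') hb1) hne1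
          intro hh; exact hb1 (by linarith)
        exact this hA
      refine ⟨hβone, hβone, ?_⟩
      rw [hβone] at hBC
      norm_num at hBC
      linarith [hBC]
    · -- β₁ ≠ β₂ : four distinct exponents force the (nonzero) middle coefficient to vanish
      exfalso
      have hne2 : β₁ ≠ β₁ + β₂ := fun hh => hb2 (by linarith)
      have hne3 : β₂ ≠ β₁ + β₂ := fun hh => hb1 (by linarith)
      obtain ⟨_, _, hC, _⟩ := exp4 hb1 hb2 hs hbb hne2 hne3 hexp
      have : (4 : ℝ) * k₂ ^ 2 * β₁ * β₂ ≠ 0 :=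
        mul_ne_zero (mul_ne_zero (mul_ne_zero four_ne_zero
          (pow_ne_zero 2 hk₂'.ne')) hb1) hb2
      exact this (by linarith [hC])
  · rintro ⟨hβ1e, hβ2e, hkk⟩
    subst hβ1e; subst hβ2e
    intro u v hu hv
    have h0 : hessDet (PKad k₁ k₂ k₃ 1 1 δ) u v = 0 := by
      rw [hessDet_PKad hk₁' hk₂' hk₃' hu hv]
      apply mul_eq_zero_of_right
      simp only [Real.rpow_one]
      linear_combination (4 * (u * v)) * hkk
    rw [gaussK, h0, zero_div]
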